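/- Let μ be the invariant (self-similar) probability measure of an iterated function system {f_i}_{i=1}^m of bi-Lipschitz contractions on the closure of a bounded open subset of a complete Riemannian n-manifold, and suppose the attractor K is not a singleton. Then μ is upper s-regular for some s > 0: there exists C > 0 such that μ(B(x,r)) ≤ C r^s for all x and all small r > 0; in particular the lower L∞-dimension of μ is strictly positive. -/

import Mathlib

open MeasureTheory Metric
open scoped ENNReal NNReal
set_option maxHeartbeats 1000000

namespace IFSProof

/-- Composition of IFS maps along a word. -/
def wordMap {X : Type*} {m : ℕ} (g : Fin m → X → X) : (k : ℕ) → (Fin k → Fin m) → X → X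
  | 0, _ => id
  | (k+1), w => g (w 0) ∘ wordMap g k (Fin.tail w)

lemma wordMap_cons {X : Type*} {m k : ℕ} (g : Fin m → X → X) (i : Fin m) (w : Fin k → Fin m) :
    wordMap g (k+1) (Fin.cons i w) = g i ∘ wordMap g k w := by
  simp [wordMap, Fin.tail_cons]

variable {X : Type*} [MeasurableSpace X]

lemma wordMap_measurable {m : ℕ} {g : Fin m → X → X} (hg : ∀ i, Measurable (g i)) :
    ∀ (k : ℕ) (w : Fin k → Fin m), Measurable (wordMap g k w)
  | 0, _ => measurable_id
  | (k+1), w => (hg (w 0)).comp (wordMap_measurable hg k (Fin.tail w))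

lemma map_finset_sum {ι : Type*} (s : Finset ι) (μ : ι → Measure X) {f : X → X}
    (hf : Measurable f) :
    Measure.map f (∑ i ∈ s, μ i) = ∑ i ∈ s, Measure.map f (μ i) := by
  classical
  induction s using Finset.induction with
  | empty => simp
  | insert _ _ h ih => simp [Finset.sum_insert h, Measure.map_add _ _ hf, ih]

lemma measure_decomp {m : ℕ} {g : Fin m → X → X} (hg : ∀ i, Measurable (g i))
    (q : Fin m → ℝ) (hq : ∀ i, 0 ≤ q i) (μ : Measure X)
    (h : μ = ∑ i, ENNReal.ofReal (q i) • Measure.map (g i) μ) (k : ℕ) :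
    μ = ∑ w : Fin k → Fin m,
      ENNReal.ofReal (∏ t, q (w t)) • Measure.map (wordMap g k w) μ := by
  classical
  induction k with
  | zero =>
      rw [Fintype.sum_unique]
      simp [wordMap]
  | succ k ih =>
      have e : ∑ w : Fin (k+1) → Fin m,
          ENNReal.ofReal (∏ t, q (w t)) • Measure.map (wordMap g (k+1) w) μ
          = ∑ iw : Fin m × (Fin k → Fin m),
          ENNReal.ofReal (∏ t, q ((Fin.cons iw.1 iw.2 : Fin (k+1) → Fin m) t)) •
            Measure.map (wordMap g (k+1) (Fin.cons iw.1 iw.2)) μ :=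
        (Fintype.sum_equiv (Fin.consEquiv fun _ => Fin m)
          (fun iw => ENNReal.ofReal (∏ t, q ((Fin.cons iw.1 iw.2 : Fin (k+1) → Fin m) t)) •
            Measure.map (wordMap g (k+1) (Fin.cons iw.1 iw.2)) μ)
          (fun w => ENNReal.ofReal (∏ t, q (w t)) • Measure.map (wordMap g (k+1) w) μ)
          (fun iw => rfl)).symm
      rw [e, Fintype.sum_prod_type]
      have key : ∀ i : Fin m, ∑ w : Fin k → Fin m,
          ENNReal.ofReal (∏ t, q ((Fin.cons i w : Fin (k+1) → Fin m) t)) •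
            Measure.map (wordMap g (k+1) (Fin.cons i w)) μ
          = ENNReal.ofReal (q i) • Measure.map (g i) μ := by
        intro i
        have hterm : ∀ w : Fin k → Fin m,
            ENNReal.ofReal (∏ t, q ((Fin.cons i w : Fin (k+1) → Fin m) t)) •
              Measure.map (wordMap g (k+1) (Fin.cons i w)) μ
            = ENNReal.ofReal (q i) •
              (ENNReal.ofReal (∏ t, q (w t)) •
                Measure.map (g i) (Measure.map (wordMap g k w) μ)) := by
          intro w
          have hprod : (∏ t : Fin (k+1), q ((Fin.cons i w : Fin (k+1) → Fin m) t))
              = q i * ∏ t, q (w t) := by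
            simp [Fin.prod_univ_succ]
          rw [wordMap_cons, ← Measure.map_map (hg i) (wordMap_measurable hg k w),
            hprod, ENNReal.ofReal_mul (hq i), smul_smul]
        rw [Finset.sum_congr rfl (fun w _ => hterm w), ← Finset.smul_sum]
        congr 1
        have : Measure.map (g i) μ = ∑ x : Fin k → Fin m,
            ENNReal.ofReal (∏ t, q (x t)) •
              Measure.map (g i) (Measure.map (wordMap g k x) μ) := by
          conv_lhs => rw [ih]
          rw [map_finset_sum _ _ (hg i)]
          exact Finset.sum_congr rfl fun x _ => by rw [Measure.map_smul]
        exact this.symm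
      rw [Finset.sum_congr rfl (fun i _ => key i)]
      exact h

lemma sum_prod_words {m : ℕ} (q : Fin m → ℝ) :
    ∀ k : ℕ, ∑ w : Fin k → Fin m, ∏ t, q (w t) = (∑ i, q i) ^ k := by
  intro k
  induction k with
  | zero => simp
  | succ k ih =>
      have e : ∑ w : Fin (k+1) → Fin m, ∏ t, q (w t)
          = ∑ iw : Fin m × (Fin k → Fin m), ∏ t, q ((Fin.cons iw.1 iw.2 : Fin (k+1) → Fin m) t) :=
        (Fintype.sum_equiv (Fin.consEquiv fun _ => Fin m)
          (fun iw => ∏ t, q ((Fin.cons iw.1 iw.2 : Fin (k+1) → Fin m) t))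
          (fun w => ∏ t, q (w t)) (fun iw => rfl)).symm
      rw [e, Fintype.sum_prod_type]
      have : ∀ i : Fin m, ∑ w : Fin k → Fin m,
          ∏ t, q ((Fin.cons i w : Fin (k+1) → Fin m) t) = q i * (∑ i, q i) ^ k := by
        intro i
        have : ∀ w : Fin k → Fin m, ∏ t, q ((Fin.cons i w : Fin (k+1) → Fin m) t)
            = q i * ∏ t, q (w t) := by
          intro w; simp [Fin.prod_univ_succ]
        rw [Finset.sum_congr rfl fun w _ => this w, ← Finset.mul_sum, ih]
      rw [Finset.sum_congr rfl fun i _ => this i, ← Finset.sum_mul, pow_succ, mul_comm]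

section Geometry

variable {Y : Type*} {m : ℕ} {g : Fin m → Y → Y} {S K : Set Y}

lemma wordMap_mapsTo [PseudoMetricSpace Y] (hmaps : ∀ i, Set.MapsTo (g i) S S) :
    ∀ (k : ℕ) (w : Fin k → Fin m), Set.MapsTo (wordMap g k w) S S
  | 0, _ => Set.mapsTo_id S
  | (k+1), w => (hmaps (w 0)).comp (wordMap_mapsTo hmaps k (Fin.tail w))

lemma wordMap_dist_le [PseudoMetricSpace Y] {R : ℝ} (hR : 0 ≤ R) (hmaps : ∀ i, Set.MapsTo (g i) S S)
    (hub : ∀ i, ∀ p ∈ S, ∀ q ∈ S, dist (g i p) (g i q) ≤ R * dist p q) :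
    ∀ (k : ℕ) (w : Fin k → Fin m), ∀ p ∈ S, ∀ q ∈ S,
      dist (wordMap g k w p) (wordMap g k w q) ≤ R ^ k * dist p q := by
  intro k
  induction k with
  | zero => intro w p _ q _; simp [wordMap]
  | succ k ih =>
      intro w p hp q hq
      have hp' := wordMap_mapsTo hmaps k (Fin.tail w) hp
      have hq' := wordMap_mapsTo hmaps k (Fin.tail w) hq
      calc dist (wordMap g (k+1) w p) (wordMap g (k+1) w q)
          ≤ R * dist (wordMap g k (Fin.tail w) p) (wordMap g k (Fin.tail w) q) :=
            hub (w 0) _ hp' _ hq'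
        _ ≤ R * (R ^ k * dist p q) := by
            exact mul_le_mul_of_nonneg_left (ih (Fin.tail w) p hp q hq) hR
        _ = R ^ (k+1) * dist p q := by ring

lemma le_wordMap_dist [PseudoMetricSpace Y] {c₀ : ℝ} (hc : 0 ≤ c₀) (hmaps : ∀ i, Set.MapsTo (g i) S S)
    (hlb : ∀ i, ∀ p ∈ S, ∀ q ∈ S, c₀ * dist p q ≤ dist (g i p) (g i q)) :
    ∀ (k : ℕ) (w : Fin k → Fin m), ∀ p ∈ S, ∀ q ∈ S,
      c₀ ^ k * dist p q ≤ dist (wordMap g k w p) (wordMap g k w q) := by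
  intro k
  induction k with
  | zero => intro w p _ q _; simp [wordMap]
  | succ k ih =>
      intro w p hp q hq
      have hp' := wordMap_mapsTo hmaps k (Fin.tail w) hp
      have hq' := wordMap_mapsTo hmaps k (Fin.tail w) hq
      calc c₀ ^ (k+1) * dist p q = c₀ * (c₀ ^ k * dist p q) := by ring
        _ ≤ c₀ * dist (wordMap g k (Fin.tail w) p) (wordMap g k (Fin.tail w) q) :=
            mul_le_mul_of_nonneg_left (ih (Fin.tail w) p hp q hq) hc
        _ ≤ dist (wordMap g (k+1) w p) (wordMap g (k+1) w q) := hlb (w 0) _ hp' _ hq'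

lemma wordMap_image_subset (hK : ∀ i, g i '' K ⊆ K) :
    ∀ (k : ℕ) (w : Fin k → Fin m), wordMap g k w '' K ⊆ K := by
  intro k
  induction k with
  | zero => intro w; simp [wordMap]
  | succ k ih =>
      intro w
      have : wordMap g (k+1) w '' K = g (w 0) '' (wordMap g k (Fin.tail w) '' K) := by
        rw [wordMap, Set.image_comp]
      rw [this]
      exact (Set.image_mono (ih (Fin.tail w))).trans (hK (w 0))

lemma exists_wordMap_of_mem (hKcover : ∀ x ∈ K, ∃ i, ∃ y ∈ K, g i y = x) :
    ∀ (k : ℕ), ∀ x ∈ K, ∃ w : Fin k → Fin m, ∃ y ∈ K, wordMap g k w y = x := by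
  intro k
  induction k with
  | zero => intro x hx; exact ⟨Fin.elim0, x, hx, rfl⟩
  | succ k ih =>
      intro x hx
      obtain ⟨i, y, hy, hiy⟩ := hKcover x hx
      obtain ⟨w, z, hz, hwz⟩ := ih y hy
      refine ⟨Fin.cons i w, z, hz, ?_⟩
      rw [wordMap_cons]
      simp [hwz, hiy]

end Geometry

end IFSProof


open IFSProof

/-- the invariant measure of an IFS of bi-Lipschitz contractions on the
closure of a bounded open set, whose attractor is not a singleton, is upper `s`-regular
for some `s > 0`; in particular its lower `L∞`-dimension is strictly positive. -/
theorem ifs_invariant_measure_upper_regular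
    {X : Type*} [MetricSpace X] [CompleteSpace X] [MeasurableSpace X] [BorelSpace X]
    (Ω : Set X) (hΩo : IsOpen Ω) (hΩb : Bornology.IsBounded Ω)
    (m : ℕ) (hm : 0 < m) (f : Fin m → X → X) (c r : Fin m → ℝ)
    (hc : ∀ i, 0 < c i) (hcr : ∀ i, c i ≤ r i) (hr : ∀ i, r i < 1)
    (hmaps : ∀ i, Set.MapsTo (f i) (closure Ω) (closure Ω))
    (hbl : ∀ i, ∀ p ∈ closure Ω, ∀ q ∈ closure Ω,
      c i * dist p q ≤ dist (f i p) (f i q) ∧ dist (f i p) (f i q) ≤ r i * dist p q)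
    (p : Fin m → ℝ) (hp : ∀ i, 0 < p i) (hpsum : ∑ i, p i = 1)
    (μ : Measure X) [IsProbabilityMeasure μ]
    (hinv : μ = ∑ i, ENNReal.ofReal (p i) • Measure.map (f i) μ)
    (K : Set X) (hKc : IsCompact K) (hKne : K.Nonempty) (hKΩ : K ⊆ closure Ω)
    (hKinv : K = ⋃ i, f i '' K)
    (hμK : μ Kᶜ = 0)
    (hKns : ¬∃ x, K = {x}) :
    (∃ s > (0 : ℝ), ∃ C > (0 : ℝ), ∃ r₀ > (0 : ℝ), ∀ x : X, ∀ ρ : ℝ, 0 < ρ → ρ ≤ r₀ →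
        μ (ball x ρ) ≤ ENNReal.ofReal (C * ρ ^ s)) ∧
      0 < Filter.liminf
        (fun δ : ℝ => Real.log ((⨆ x : X, μ (ball x δ)).toReal) / Real.log δ)
        (nhdsWithin 0 (Set.Ioi 0)) := by
  classical
  obtain ⟨k₀, hk₀⟩ := hKne
  set S : Set X := closure Ω with hS_def
  have hSclosed : IsClosed S := isClosed_closure
  -- the modified (measurable) maps
  set g : Fin m → X → X := fun i => S.piecewise (f i) (fun _ => k₀) with hg_def
  have hgf : ∀ i, ∀ x ∈ S, g i x = f i x := by
    intro i x hx; simp [hg_def, Set.piecewise, hx]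
  have hgmeas : ∀ i, Measurable (g i) := by
    intro i
    refine ContinuousOn.measurable_piecewise ?_ continuousOn_const hSclosed.measurableSet
    refine LipschitzOnWith.continuousOn (K := Real.toNNReal (r i)) ?_
    refine LipschitzOnWith.of_dist_le_mul ?_
    intro x hx y hy
    have := (hbl i x hx y hy).2
    rwa [Real.coe_toNNReal _ (le_trans (hc i).le (hcr i))]
  have hgmaps : ∀ i, Set.MapsTo (g i) S S := by
    intro i x hx; rw [hgf i x hx]; exact hmaps i hx
  have hglb : ∀ i, ∀ p' ∈ S, ∀ q ∈ S, c i * dist p' q ≤ dist (g i p') (g i q) := by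
    intro i a ha b hb; rw [hgf i a ha, hgf i b hb]; exact (hbl i a ha b hb).1
  have hgub : ∀ i, ∀ p' ∈ S, ∀ q ∈ S, dist (g i p') (g i q) ≤ r i * dist p' q := by
    intro i a ha b hb; rw [hgf i a ha, hgf i b hb]; exact (hbl i a ha b hb).2
  have hgKimg : ∀ i, g i '' K ⊆ K := by
    intro i x hx
    obtain ⟨y, hy, rfl⟩ := hx
    rw [hgf i y (hKΩ hy)]
    rw [hKinv]
    exact Set.mem_iUnion.2 ⟨i, ⟨y, hy, rfl⟩⟩
  have hKcover : ∀ x ∈ K, ∃ i, ∃ y ∈ K, g i y = x := by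
    intro x hx
    rw [hKinv] at hx
    obtain ⟨i, y, hy, rfl⟩ := Set.mem_iUnion.1 hx
    exact ⟨i, y, hy, hgf i y (hKΩ hy)⟩
  -- μ-a.e. equality and the invariance for g
  have hμS : μ Sᶜ = 0 := by
    refine measure_mono_null ?_ hμK
    exact Set.compl_subset_compl.2 hKΩ
  have hinv' : μ = ∑ i, ENNReal.ofReal (p i) • Measure.map (g i) μ := by
    conv_lhs => rw [hinv]
    refine Finset.sum_congr rfl fun i _ => ?_
    congr 1
    refine Measure.map_congr ?_
    refine Filter.eventuallyEq_of_mem (?_ : S ∈ ae μ) (fun x hx => (hgf i x hx).symm)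
    rw [mem_ae_iff]
    exact hμS
  -- basic constants
  haveI : Nonempty (Fin m) := ⟨⟨0, hm⟩⟩
  have hKb : Bornology.IsBounded K := hKc.isBounded
  obtain ⟨a₀, ha₀, b₀, hb₀, hab₀⟩ : ∃ a ∈ K, ∃ b ∈ K, a ≠ b := by
    by_contra h
    push_neg at h
    exact hKns ⟨k₀, Set.eq_singleton_iff_unique_mem.2 ⟨hk₀, fun y hy => h y hy k₀ hk₀⟩⟩
  set D : ℝ := Metric.diam K with hD_def
  have hD : 0 < D := by
    have h1 : dist a₀ b₀ ≤ D := Metric.dist_le_diam_of_mem hKb ha₀ hb₀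
    have h2 : 0 < dist a₀ b₀ := dist_pos.2 hab₀
    linarith
  set R : ℝ := Finset.univ.sup' Finset.univ_nonempty r with hR_def
  have hrR : ∀ i, r i ≤ R := fun i => Finset.le_sup' r (Finset.mem_univ i)
  have hR1 : R < 1 := (Finset.sup'_lt_iff _).2 fun i _ => hr i
  have hR0 : 0 < R := lt_of_lt_of_le (lt_of_lt_of_le (hc ⟨0, hm⟩) (hcr _)) (hrR ⟨0, hm⟩)
  set c₀ : ℝ := Finset.univ.inf' Finset.univ_nonempty c with hc₀_def
  have hc₀c : ∀ i, c₀ ≤ c i := fun i => Finset.inf'_le c (Finset.mem_univ i)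
  have hc₀ : 0 < c₀ := (Finset.lt_inf'_iff _).2 fun i _ => hc i
  have hc₀1 : c₀ < 1 := lt_of_le_of_lt (hc₀c ⟨0, hm⟩) (lt_of_le_of_lt (hcr _) (hr _))
  set pm : ℝ := Finset.univ.inf' Finset.univ_nonempty p with hpm_def
  have hpmp : ∀ i, pm ≤ p i := fun i => Finset.inf'_le p (Finset.mem_univ i)
  have hpm0 : 0 < pm := (Finset.lt_inf'_iff _).2 fun i _ => hp i
  have hple1 : ∀ i, p i ≤ 1 := by
    intro i
    rw [← hpsum]
    exact Finset.single_le_sum (fun j _ => (hp j).le) (Finset.mem_univ i)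
  have hpm1 : pm ≤ 1 := le_trans (hpmp ⟨0, hm⟩) (hple1 _)
  -- choose the word length k
  obtain ⟨k, hk⟩ : ∃ k : ℕ, R ^ k < 1/3 := exists_pow_lt_of_lt_one (by norm_num) hR1
  have hkD : R ^ k * D < D / 3 := by
    have := mul_lt_mul_of_pos_right hk hD
    linarith
  -- uniform bounds on S for the word maps of length k
  have hWmaps : ∀ w : Fin k → Fin m, Set.MapsTo (wordMap g k w) S S :=
    fun w => wordMap_mapsTo hgmaps k w
  have hWub : ∀ w : Fin k → Fin m, ∀ a ∈ S, ∀ b ∈ S,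
      dist (wordMap g k w a) (wordMap g k w b) ≤ R ^ k * dist a b := by
    intro w a ha b hb
    refine wordMap_dist_le hR0.le hgmaps (fun i a' ha' b' hb' => ?_) k w a ha b hb
    exact le_trans (hgub i a' ha' b' hb') (mul_le_mul_of_nonneg_right (hrR i) dist_nonneg)
  have hWlb : ∀ w : Fin k → Fin m, ∀ a ∈ S, ∀ b ∈ S,
      c₀ ^ k * dist a b ≤ dist (wordMap g k w a) (wordMap g k w b) := by
    intro w a ha b hb
    refine le_wordMap_dist hc₀.le hgmaps (fun i a' ha' b' hb' => ?_) k w a ha b hb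
    exact le_trans (mul_le_mul_of_nonneg_right (hc₀c i) dist_nonneg) (hglb i a' ha' b' hb')
  have hWK : ∀ w : Fin k → Fin m, wordMap g k w '' K ⊆ K :=
    fun w => wordMap_image_subset hgKimg k w
  -- cylinders
  set Cyl : (Fin k → Fin m) → Set X := fun w => wordMap g k w '' K with hCyl_def
  have hCylK : ∀ w, Cyl w ⊆ K := hWK
  have hCylne : ∀ w, (Cyl w).Nonempty := fun w => ⟨wordMap g k w k₀, ⟨k₀, hk₀, rfl⟩⟩
  have hCylcomp : ∀ w, IsCompact (Cyl w) := by
    intro w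
    refine hKc.image_of_continuousOn ?_
    refine ContinuousOn.mono (s := S) (LipschitzOnWith.continuousOn
      (K := Real.toNNReal (R ^ k)) (LipschitzOnWith.of_dist_le_mul ?_)) hKΩ
    intro a ha b hb
    rw [Real.coe_toNNReal _ (pow_nonneg hR0.le k)]
    exact hWub w a ha b hb
  have hCyldiam : ∀ w, ∀ a ∈ Cyl w, ∀ b ∈ Cyl w, dist a b ≤ R ^ k * D := by
    rintro w a ⟨a', ha', rfl⟩ b ⟨b', hb', rfl⟩
    refine le_trans (hWub w a' (hKΩ ha') b' (hKΩ hb')) ?_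
    exact mul_le_mul_of_nonneg_left (Metric.dist_le_diam_of_mem hKb ha' hb') (pow_nonneg hR0.le k)
  -- two disjoint cylinders
  obtain ⟨a₁, ha₁, b₁, hb₁, hab₁⟩ : ∃ a ∈ K, ∃ b ∈ K, 2 / 3 * D < dist a b := by
    by_contra h
    push_neg at h
    have : D ≤ 2 / 3 * D := Metric.diam_le_of_forall_dist_le (by linarith) h
    linarith
  obtain ⟨u, a₁', ha₁', hua⟩ := exists_wordMap_of_mem hKcover k a₁ ha₁
  obtain ⟨v, b₁', hb₁', hvb⟩ := exists_wordMap_of_mem hKcover k b₁ hb₁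
  have ha₁u : a₁ ∈ Cyl u := ⟨a₁', ha₁', hua⟩
  have hb₁v : b₁ ∈ Cyl v := ⟨b₁', hb₁', hvb⟩
  have hdisj : Disjoint (Cyl u) (Cyl v) := by
    rw [Set.disjoint_left]
    intro z hzu hzv
    have h1 : dist a₁ z ≤ R ^ k * D := hCyldiam u a₁ ha₁u z hzu
    have h2 : dist z b₁ ≤ R ^ k * D := hCyldiam v z hzv b₁ hb₁v
    have := dist_triangle a₁ z b₁
    linarith
  obtain ⟨ε', hε', hsep'⟩ := EMetric.exists_pos_forall_lt_edist (hCylcomp u) (hCylcomp v).isClosed hdisj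
  set ε : ℝ := (ε' : ℝ) with hε_def
  have hε : 0 < ε := hε'
  have hsep : ∀ x₁ ∈ Cyl u, ∀ x₂ ∈ Cyl v, ε ≤ dist x₁ x₂ := by
    intro x₁ h₁ x₂ h₂
    have h := (hsep' x₁ h₁ x₂ h₂).le
    rw [edist_nndist, ENNReal.coe_le_coe] at h
    exact_mod_cast h
  -- the key constants
  set aa : ℝ := c₀ ^ k / 2 with haa_def
  have haa0 : 0 < aa := by positivity
  have haa1 : aa < 1 := by
    have : c₀ ^ k ≤ 1 := pow_le_one₀ hc₀.le hc₀1.le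
    rw [haa_def]; linarith
  set γ : ℝ := 1 - pm ^ k with hγ_def
  have hγ0 : 0 ≤ γ := by
    have : pm ^ k ≤ 1 := pow_le_one₀ hpm0.le hpm1
    rw [hγ_def]; linarith
  have hγ1 : γ < 1 := by
    have : 0 < pm ^ k := pow_pos hpm0 k
    rw [hγ_def]; linarith
  -- products of probabilities along words
  set P : (Fin k → Fin m) → ℝ := fun w => ∏ t, p (w t) with hP_def
  have hP0 : ∀ w, 0 ≤ P w := fun w => Finset.prod_nonneg fun t _ => (hp _).le
  have hPm : ∀ w, pm ^ k ≤ P w := by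
    intro w
    calc pm ^ k = ∏ _t : Fin k, pm := by rw [Finset.prod_const, Finset.card_univ, Fintype.card_fin]
      _ ≤ P w := Finset.prod_le_prod (fun t _ => hpm0.le) (fun t _ => hpmp (w t))
  have hPsum : ∑ w : Fin k → Fin m, P w = 1 := by
    rw [hP_def]
    rw [sum_prod_words p k, hpsum, one_pow]
  -- separation of a ball from some cylinder
  have hball_sep : ∀ (x : X) (ρ : ℝ), ρ ≤ ε / 2 →
      ∃ w : Fin k → Fin m, ball x ρ ∩ Cyl w = ∅ := by
    intro x ρ hρ
    by_cases hu : ball x ρ ∩ Cyl u = ∅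
    · exact ⟨u, hu⟩
    · refine ⟨v, ?_⟩
      obtain ⟨x₁, hx₁b, hx₁u⟩ := Set.nonempty_iff_ne_empty.2 hu
      by_contra hv
      obtain ⟨x₂, hx₂b, hx₂v⟩ := Set.nonempty_iff_ne_empty.2 hv
      have h1 : dist x₁ x < ρ := mem_ball.1 hx₁b
      have h2 : dist x x₂ < ρ := by
        have := mem_ball.1 hx₂b
        rwa [dist_comm] at this
      have h3 : ε ≤ dist x₁ x₂ := hsep x₁ hx₁u x₂ hx₂v
      have := dist_triangle x₁ x x₂
      linarith
  -- decomposition of μ at level k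
  have hdecomp := measure_decomp hgmeas p (fun i => (hp i).le) μ hinv' k
  have hterm : ∀ (B : Set X), MeasurableSet B →
      μ B = ∑ w : Fin k → Fin m, ENNReal.ofReal (P w) * μ (wordMap g k w ⁻¹' B) := by
    intro B hB
    conv_lhs => rw [hdecomp]
    rw [Measure.finset_sum_apply]
    refine Finset.sum_congr rfl fun w _ => ?_
    rw [Measure.smul_apply, smul_eq_mul,
      Measure.map_apply (wordMap_measurable hgmeas k w) hB]
  have hKcap : ∀ (A : Set X), μ A ≤ μ (A ∩ K) := by
    intro A
    calc μ A ≤ μ ((A ∩ K) ∪ Kᶜ) := by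
          refine measure_mono fun z hz => ?_
          by_cases hzK : z ∈ K
          · exact Or.inl ⟨hz, hzK⟩
          · exact Or.inr hzK
      _ ≤ μ (A ∩ K) + μ Kᶜ := measure_union_le _ _
      _ = μ (A ∩ K) := by rw [hμK, add_zero]
  -- the main inductive estimate
  have key : ∀ (j : ℕ) (x : X), μ (ball x (ε / 2 * aa ^ j)) ≤ ENNReal.ofReal (γ ^ (j + 1)) := by
    intro j
    induction j with
    | zero =>
        intro x
        obtain ⟨w₀, hw₀⟩ := hball_sep x (ε / 2 * aa ^ 0) (by rw [pow_zero, mul_one])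
        rw [hterm _ measurableSet_ball]
        have hzero : μ (wordMap g k w₀ ⁻¹' ball x (ε / 2 * aa ^ 0)) = 0 := by
          refine le_antisymm ?_ zero_le
          refine le_trans (hKcap _) ?_
          have he : wordMap g k w₀ ⁻¹' ball x (ε / 2 * aa ^ 0) ∩ K = ∅ := by
            rw [Set.eq_empty_iff_forall_notMem]
            rintro z ⟨hz1, hz2⟩
            have hmem : wordMap g k w₀ z ∈ ball x (ε / 2 * aa ^ 0) ∩ Cyl w₀ :=
              ⟨hz1, ⟨z, hz2, rfl⟩⟩
            rw [hw₀] at hmem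
            exact hmem
          rw [he, measure_empty]
        calc ∑ w : Fin k → Fin m, ENNReal.ofReal (P w) * μ (wordMap g k w ⁻¹' ball x (ε / 2 * aa ^ 0))
            = ∑ w ∈ Finset.univ.erase w₀, ENNReal.ofReal (P w) * μ (wordMap g k w ⁻¹' ball x (ε / 2 * aa ^ 0)) := by
              rw [← Finset.sum_erase_add _ _ (Finset.mem_univ w₀), hzero, mul_zero, add_zero]
          _ ≤ ∑ w ∈ Finset.univ.erase w₀, ENNReal.ofReal (P w) * 1 := by
              refine Finset.sum_le_sum fun w _ => ?_
              exact mul_le_mul_right prob_le_one _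
          _ = ENNReal.ofReal (∑ w ∈ Finset.univ.erase w₀, P w) := by
              rw [ENNReal.ofReal_sum_of_nonneg fun w _ => hP0 w]
              simp
          _ ≤ ENNReal.ofReal (γ ^ (0 + 1)) := by
              refine ENNReal.ofReal_le_ofReal ?_
              have hs : ∑ w ∈ Finset.univ.erase w₀, P w + P w₀ = 1 := by
                rw [Finset.sum_erase_add _ _ (Finset.mem_univ w₀), hPsum]
              have := hPm w₀
              rw [pow_one, hγ_def]
              linarith
    | succ j ih =>
        intro x
        obtain ⟨w₀, hw₀⟩ := hball_sep x (ε / 2 * aa ^ (j + 1)) (by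
          have h1 : aa ^ (j+1) ≤ 1 := pow_le_one₀ haa0.le haa1.le
          have h2 : (0:ℝ) ≤ ε / 2 := by linarith
          exact le_trans (mul_le_mul_of_nonneg_left h1 h2) (le_of_eq (mul_one _)))
        rw [hterm _ measurableSet_ball]
        have hzero : μ (wordMap g k w₀ ⁻¹' ball x (ε / 2 * aa ^ (j+1))) = 0 := by
          refine le_antisymm ?_ zero_le
          refine le_trans (hKcap _) ?_
          have he : wordMap g k w₀ ⁻¹' ball x (ε / 2 * aa ^ (j+1)) ∩ K = ∅ := by
            rw [Set.eq_empty_iff_forall_notMem]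
            rintro z ⟨hz1, hz2⟩
            have hmem : wordMap g k w₀ z ∈ ball x (ε / 2 * aa ^ (j+1)) ∩ Cyl w₀ :=
              ⟨hz1, ⟨z, hz2, rfl⟩⟩
            rw [hw₀] at hmem
            exact hmem
          rw [he, measure_empty]
        have hsmall : ∀ w : Fin k → Fin m,
            μ (wordMap g k w ⁻¹' ball x (ε / 2 * aa ^ (j+1))) ≤ ENNReal.ofReal (γ ^ (j+1)) := by
          intro w
          refine le_trans (hKcap _) ?_
          rcases Set.eq_empty_or_nonempty (wordMap g k w ⁻¹' ball x (ε / 2 * aa ^ (j+1)) ∩ K)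
            with he | ⟨y, hy1, hy2⟩
          · rw [he, measure_empty]; exact zero_le
          · have hsub : wordMap g k w ⁻¹' ball x (ε / 2 * aa ^ (j+1)) ∩ K ⊆ ball y (ε / 2 * aa ^ j) := by
              rintro z ⟨hz1, hz2⟩
              have h1 : dist (wordMap g k w z) (wordMap g k w y) < 2 * (ε / 2 * aa ^ (j+1)) := by
                have d1 : dist (wordMap g k w z) x < ε / 2 * aa ^ (j+1) := mem_ball.1 hz1
                have d2 : dist (wordMap g k w y) x < ε / 2 * aa ^ (j+1) := mem_ball.1 hy1
                have := dist_triangle (wordMap g k w z) x (wordMap g k w y)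
                rw [dist_comm x (wordMap g k w y)] at this
                linarith
              have h2 : c₀ ^ k * dist z y ≤ dist (wordMap g k w z) (wordMap g k w y) :=
                hWlb w z (hKΩ hz2) y (hKΩ hy2)
              have h3 : dist z y < 2 * (ε / 2 * aa ^ (j+1)) / c₀ ^ k := by
                rw [lt_div_iff₀ (pow_pos hc₀ k)]
                calc dist z y * c₀ ^ k = c₀ ^ k * dist z y := by ring
                  _ ≤ dist (wordMap g k w z) (wordMap g k w y) := h2
                  _ < 2 * (ε / 2 * aa ^ (j+1)) := h1
              have h4 : 2 * (ε / 2 * aa ^ (j+1)) / c₀ ^ k = ε / 2 * aa ^ j := by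
                rw [haa_def]
                field_simp
                ring
              rw [mem_ball]
              rw [h4] at h3
              exact h3
            exact le_trans (measure_mono hsub) (ih y)
        calc ∑ w : Fin k → Fin m, ENNReal.ofReal (P w) * μ (wordMap g k w ⁻¹' ball x (ε / 2 * aa ^ (j+1)))
            = ∑ w ∈ Finset.univ.erase w₀, ENNReal.ofReal (P w) * μ (wordMap g k w ⁻¹' ball x (ε / 2 * aa ^ (j+1))) := by
              rw [← Finset.sum_erase_add _ _ (Finset.mem_univ w₀), hzero, mul_zero, add_zero]
          _ ≤ ∑ w ∈ Finset.univ.erase w₀, ENNReal.ofReal (P w) * ENNReal.ofReal (γ ^ (j+1)) := by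
              refine Finset.sum_le_sum fun w _ => ?_
              exact mul_le_mul_right (hsmall w) _
          _ = ENNReal.ofReal (∑ w ∈ Finset.univ.erase w₀, P w) * ENNReal.ofReal (γ ^ (j+1)) := by
              rw [← Finset.sum_mul, ENNReal.ofReal_sum_of_nonneg fun w _ => hP0 w]
          _ ≤ ENNReal.ofReal γ * ENNReal.ofReal (γ ^ (j+1)) := by
              refine mul_le_mul_left (ENNReal.ofReal_le_ofReal ?_) _
              have hs : ∑ w ∈ Finset.univ.erase w₀, P w + P w₀ = 1 := by
                rw [Finset.sum_erase_add _ _ (Finset.mem_univ w₀), hPsum]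
              have := hPm w₀
              rw [hγ_def]
              linarith
          _ = ENNReal.ofReal (γ ^ (j + 1 + 1)) := by
              rw [← ENNReal.ofReal_mul hγ0]
              congr 1
              ring
  -- k is at least 1 and m at least 2
  have huv : u ≠ v := by
    rintro rfl
    exact (hCylne u).ne_empty (disjoint_self.mp hdisj)
  obtain ⟨t₀, ht₀⟩ : ∃ t, u t ≠ v t := by
    by_contra h
    push_neg at h
    exact huv (funext h)
  have hpmhalf : pm < 1 := by
    have h12 : u t₀ ≠ v t₀ := ht₀
    have hpair : p (u t₀) + p (v t₀) ≤ 1 := by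
      rw [← hpsum]
      rw [← Finset.sum_pair h12]
      exact Finset.sum_le_sum_of_subset_of_nonneg (Finset.subset_univ _)
        (fun i _ _ => (hp i).le)
    have := hpmp (u t₀)
    have := hpmp (v t₀)
    linarith
  have hk0 : k ≠ 0 := by
    have := t₀.pos
    omega
  have hγpos : 0 < γ := by
    have : pm ^ k < 1 := pow_lt_one₀ hpm0.le hpmhalf hk0
    rw [hγ_def]; linarith
  -- the exponent
  set s : ℝ := Real.log γ / Real.log aa with hs_def
  have hlogγ : Real.log γ < 0 := Real.log_neg hγpos hγ1
  have hlogaa : Real.log aa < 0 := Real.log_neg haa0 haa1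
  have hs0 : 0 < s := by
    rw [hs_def, ← neg_div_neg_eq]
    exact div_pos (by linarith) (by linarith)
  have haas : aa ^ s = γ := by
    rw [Real.rpow_def_of_pos haa0, hs_def, mul_div_cancel₀ _ (ne_of_lt hlogaa),
      Real.exp_log hγpos]
  set C : ℝ := (2 / ε) ^ s with hC_def
  have hC0 : 0 < C := Real.rpow_pos_of_pos (by positivity) s
  -- Part 1 : upper regularity
  have hreg : ∀ x : X, ∀ ρ : ℝ, 0 < ρ → ρ ≤ ε / 2 →
      μ (ball x ρ) ≤ ENNReal.ofReal (C * ρ ^ s) := by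
    intro x ρ hρ0 hρ
    have hex : ∃ n : ℕ, ε / 2 * aa ^ n < ρ := by
      obtain ⟨n, hn⟩ := exists_pow_lt_of_lt_one (show (0:ℝ) < ρ / (ε / 2) by positivity) haa1
      refine ⟨n, ?_⟩
      rw [lt_div_iff₀ (by linarith : (0:ℝ) < ε / 2)] at hn
      linarith [hn]
    have hfind := Nat.find_spec hex
    have hn₀ : Nat.find hex ≠ 0 := by
      intro h
      rw [h, pow_zero, mul_one] at hfind
      linarith
    obtain ⟨n, hn⟩ : ∃ n, Nat.find hex = n + 1 := ⟨Nat.find hex - 1, (Nat.succ_pred_eq_of_pos (Nat.pos_of_ne_zero hn₀)).symm⟩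
    have hmin : ¬(ε / 2 * aa ^ n < ρ) := Nat.find_min hex (by omega)
    push_neg at hmin
    have h1 : μ (ball x ρ) ≤ ENNReal.ofReal (γ ^ (n + 1)) :=
      le_trans (measure_mono (ball_subset_ball hmin)) (key n x)
    refine h1.trans (ENNReal.ofReal_le_ofReal ?_)
    have h2 : γ ^ (n + 1) = ((aa ^ (n + 1) : ℝ)) ^ s := by
      rw [← haas, ← Real.rpow_natCast (aa ^ s) (n + 1), ← Real.rpow_natCast aa (n + 1),
        ← Real.rpow_mul haa0.le, ← Real.rpow_mul haa0.le, mul_comm]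
    have h3 : (aa ^ (n + 1) : ℝ) ≤ 2 / ε * ρ := by
      rw [hn] at hfind
      have heq : aa ^ (n+1) = 2 / ε * (ε / 2 * aa ^ (n+1)) := by
        field_simp
      rw [heq]
      exact mul_le_mul_of_nonneg_left hfind.le (by positivity)
    have h4 : ((aa ^ (n + 1) : ℝ)) ^ s ≤ (2 / ε * ρ) ^ s :=
      Real.rpow_le_rpow (pow_nonneg haa0.le _) h3 hs0.le
    have h5 : ((2 / ε * ρ) : ℝ) ^ s = C * ρ ^ s := by
      rw [hC_def, Real.mul_rpow (by positivity) hρ0.le]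
    rw [h2]
    rw [h5] at h4
    exact h4
  refine ⟨⟨s, hs0, C, hC0, ε / 2, by linarith, hreg⟩, ?_⟩
  -- Part 2 : positivity of the lower L∞ dimension
  have hμK1 : μ K = 1 := by
    refine le_antisymm prob_le_one ?_
    calc (1 : ℝ≥0∞) = μ Set.univ := (measure_univ).symm
      _ ≤ μ K + μ Kᶜ := by
          refine le_trans (measure_mono (by simp : Set.univ ⊆ K ∪ Kᶜ)) (measure_union_le _ _)
      _ = μ K := by rw [hμK, add_zero]
  have hm2 : 2 ≤ m := by
    have hnt : Nontrivial (Fin m) := ⟨⟨u t₀, v t₀, ht₀⟩⟩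
    have h := Fintype.one_lt_card (α := Fin m)
    rw [Fintype.card_fin] at h
    omega
  have hlogm : 0 < Real.log m := Real.log_pos (by exact_mod_cast hm2)
  set L : ℝ := -Real.log R with hL_def
  have hL0 : 0 < L := by
    rw [hL_def]
    have := Real.log_neg hR0 hR1
    linarith
  set M : ℝ := 3 * Real.log m / L with hM_def
  set Z : ℝ := max 1 (max |Real.log D| (max L (2 * |Real.log C| / s))) with hZ_def
  set η : ℝ := min (ε / 2) (min D (Real.exp (-Z))) with hη_def
  have hη0 : 0 < η := by
    refine lt_min (by linarith) (lt_min hD (Real.exp_pos _))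
  -- the basic estimates valid for all small δ
  have hmain : ∀ δ : ℝ, δ ∈ Set.Ioo 0 η →
      s / 2 ≤ Real.log ((⨆ x : X, μ (ball x δ)).toReal) / Real.log δ ∧
      Real.log ((⨆ x : X, μ (ball x δ)).toReal) / Real.log δ ≤ M := by
    intro δ ⟨hδ0, hδη⟩
    have hδε : δ ≤ ε / 2 := le_trans hδη.le (min_le_left _ _)
    have hδD : δ ≤ D := le_trans hδη.le (le_trans (min_le_right _ _) (min_le_left _ _))
    have hδZ : Real.log δ ≤ -Z := by
      have : δ ≤ Real.exp (-Z) := le_trans hδη.le (le_trans (min_le_right _ _) (min_le_right _ _))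
      calc Real.log δ ≤ Real.log (Real.exp (-Z)) := (Real.log_le_log_iff hδ0 (Real.exp_pos _)).2 this
        _ = -Z := Real.log_exp _
    set ld : ℝ := -Real.log δ with hld_def
    have hZ1 : (1:ℝ) ≤ Z := le_max_left _ _
    have hZD : |Real.log D| ≤ Z := le_trans (le_max_left _ _) (le_max_right _ _)
    have hZL : L ≤ Z := le_trans (le_trans (le_max_left _ _) (le_max_right _ _)) (le_max_right _ _)
    have hZC : 2 * |Real.log C| / s ≤ Z :=
      le_trans (le_trans (le_max_right _ _) (le_max_right _ _)) (le_max_right _ _)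
    have hld : Z ≤ ld := by rw [hld_def]; linarith
    have hldpos : 0 < ld := lt_of_lt_of_le (by linarith) hld
    have hlogδ : Real.log δ < 0 := by rw [hld_def] at hldpos; linarith
    -- the covering estimate
    have hexj : ∃ n : ℕ, R ^ n * D < δ := by
      obtain ⟨n, hn⟩ := exists_pow_lt_of_lt_one (show (0:ℝ) < δ / D by positivity) hR1
      refine ⟨n, ?_⟩
      rw [lt_div_iff₀ hD] at hn
      linarith
    have hfindj := Nat.find_spec hexj
    have hnj0 : Nat.find hexj ≠ 0 := by
      intro h
      rw [h, pow_zero, one_mul] at hfindj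
      linarith
    obtain ⟨nj, hnj⟩ : ∃ n, Nat.find hexj = n + 1 :=
      ⟨Nat.find hexj - 1, (Nat.succ_pred_eq_of_pos (Nat.pos_of_ne_zero hnj0)).symm⟩
    have hminj : ¬(R ^ nj * D < δ) := Nat.find_min hexj (by omega)
    push_neg at hminj
    set N : ℕ := Nat.find hexj with hN_def
    -- K is covered by m ^ N balls of radius δ
    have hcov : K ⊆ ⋃ w : Fin N → Fin m, ball (wordMap g N w k₀) δ := by
      intro x hx
      obtain ⟨w, y, hy, hwy⟩ := exists_wordMap_of_mem hKcover N x hx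
      refine Set.mem_iUnion.2 ⟨w, ?_⟩
      rw [mem_ball, ← hwy]
      calc dist (wordMap g N w y) (wordMap g N w k₀) ≤ R ^ N * dist y k₀ := by
            refine wordMap_dist_le hR0.le hgmaps (fun i a' ha' b' hb' => ?_) N w y (hKΩ hy) k₀ (hKΩ hk₀)
            exact le_trans (hgub i a' ha' b' hb') (mul_le_mul_of_nonneg_right (hrR i) dist_nonneg)
        _ ≤ R ^ N * D := mul_le_mul_of_nonneg_left (Metric.dist_le_diam_of_mem hKb hy hk₀) (pow_nonneg hR0.le _)
        _ < δ := hfindj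
    have hSup_le_one : (⨆ x : X, μ (ball x δ)) ≤ 1 := iSup_le fun x => prob_le_one
    have hcard : (Fintype.card (Fin N → Fin m) : ℝ≥0∞) = ((m ^ N : ℕ) : ℝ≥0∞) := by
      norm_cast
      rw [Fintype.card_fun, Fintype.card_fin, Fintype.card_fin]
    have hcover_bound : (1 : ℝ≥0∞) ≤ ((m ^ N : ℕ) : ℝ≥0∞) * ⨆ x : X, μ (ball x δ) := by
      calc (1 : ℝ≥0∞) = μ K := hμK1.symm
        _ ≤ μ (⋃ w : Fin N → Fin m, ball (wordMap g N w k₀) δ) := measure_mono hcov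
        _ ≤ ∑ w : Fin N → Fin m, μ (ball (wordMap g N w k₀) δ) := measure_iUnion_fintype_le _ _
        _ ≤ ∑ _w : Fin N → Fin m, ⨆ x : X, μ (ball x δ) :=
            Finset.sum_le_sum fun w _ => le_iSup (fun x => μ (ball x δ)) _
        _ = ((m ^ N : ℕ) : ℝ≥0∞) * ⨆ x : X, μ (ball x δ) := by
            rw [Finset.sum_const, Finset.card_univ, nsmul_eq_mul, hcard]
    have hNne : ((m ^ N : ℕ) : ℝ≥0∞) ≠ 0 := by
      simp only [ne_eq, Nat.cast_eq_zero, pow_eq_zero_iff', not_and]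
      intro h; omega
    have hNnetop : ((m ^ N : ℕ) : ℝ≥0∞) ≠ ⊤ := ENNReal.natCast_ne_top _
    have hSup_lb : (((m ^ N : ℕ) : ℝ≥0∞))⁻¹ ≤ ⨆ x : X, μ (ball x δ) := by
      calc (((m ^ N : ℕ) : ℝ≥0∞))⁻¹ = (((m ^ N : ℕ) : ℝ≥0∞))⁻¹ * 1 := (mul_one _).symm
        _ ≤ (((m ^ N : ℕ) : ℝ≥0∞))⁻¹ * (((m ^ N : ℕ) : ℝ≥0∞) * ⨆ x : X, μ (ball x δ)) :=
            mul_le_mul_right hcover_bound _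
        _ = ⨆ x : X, μ (ball x δ) := by
            rw [← mul_assoc, ENNReal.inv_mul_cancel hNne hNnetop, one_mul]
    set T : ℝ := (⨆ x : X, μ (ball x δ)).toReal with hT_def
    have hT_lb : ((m : ℝ) ^ N)⁻¹ ≤ T := by
      have h := ENNReal.toReal_mono (by exact ne_top_of_le_ne_top ENNReal.one_ne_top hSup_le_one) hSup_lb
      rwa [ENNReal.toReal_inv, ENNReal.toReal_natCast, Nat.cast_pow] at h
    have hT_pos : 0 < T := lt_of_lt_of_le (by positivity) hT_lb
    have hT_ub : T ≤ C * δ ^ s := by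
      have h1 : (⨆ x : X, μ (ball x δ)) ≤ ENNReal.ofReal (C * δ ^ s) :=
        iSup_le fun x => hreg x δ hδ0 hδε
      have h2 := ENNReal.toReal_mono ENNReal.ofReal_ne_top h1
      rwa [ENNReal.toReal_ofReal (by positivity)] at h2
    have hT_le_one : T ≤ 1 := by
      have := ENNReal.toReal_mono ENNReal.one_ne_top hSup_le_one
      simpa using this
    -- log estimates
    have hlogT_ub : Real.log T ≤ Real.log C + s * Real.log δ := by
      calc Real.log T ≤ Real.log (C * δ ^ s) := (Real.log_le_log_iff hT_pos (by positivity)).2 hT_ub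
        _ = Real.log C + s * Real.log δ := by
            rw [Real.log_mul (ne_of_gt hC0) (ne_of_gt (Real.rpow_pos_of_pos hδ0 s)),
              Real.log_rpow hδ0]
    have hlogT_lb : -((N : ℝ) * Real.log m) ≤ Real.log T := by
      have h1 : Real.log (((m:ℝ) ^ N)⁻¹) ≤ Real.log T :=
        (Real.log_le_log_iff (by positivity) hT_pos).2 hT_lb
      rwa [Real.log_inv, Real.log_pow] at h1
    -- bound on N
    have hNle : (N : ℝ) ≤ 3 * ld / L := by
      have hlog1 : Real.log δ ≤ Real.log (R ^ nj * D) := (Real.log_le_log_iff hδ0 (by positivity)).2 hminj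
      rw [Real.log_mul (by positivity) (ne_of_gt hD), Real.log_pow] at hlog1
      have hnjL : (nj : ℝ) * L ≤ Real.log D + ld := by
        rw [hL_def, hld_def]; linarith [hlog1]
      have hDld : Real.log D ≤ ld := le_trans (le_abs_self _) (le_trans hZD hld)
      have hLld : L ≤ ld := le_trans hZL hld
      have hnj_le : (nj : ℝ) ≤ 2 * ld / L := by
        rw [le_div_iff₀ hL0]; linarith
      have : (N : ℝ) = (nj : ℝ) + 1 := by rw [hnj]; push_cast; ring
      rw [this]
      have h1le : (1:ℝ) ≤ ld / L := by rw [le_div_iff₀ hL0]; linarith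
      calc (nj : ℝ) + 1 ≤ 2 * ld / L + ld / L := by
            refine add_le_add hnj_le h1le
        _ = 3 * ld / L := by ring
    constructor
    · -- lower bound s/2
      rw [le_div_iff_of_neg hlogδ]
      have h1 : 2 * |Real.log C| / s ≤ ld := le_trans hZC hld
      have h2 : 2 * |Real.log C| ≤ ld * s := by rwa [div_le_iff₀ hs0] at h1
      have hClog : |Real.log C| ≤ s / 2 * ld := by
        calc |Real.log C| = 2 * |Real.log C| / 2 := by ring
          _ ≤ ld * s / 2 := by gcongr
          _ = s / 2 * ld := by ring
      calc Real.log T ≤ Real.log C + s * Real.log δ := hlogT_ub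
        _ ≤ s / 2 * ld + s * Real.log δ := by
            exact add_le_add (le_trans (le_abs_self _) hClog) le_rfl
        _ = s / 2 * Real.log δ := by rw [hld_def]; ring
    · -- upper bound M
      rw [div_le_iff_of_neg hlogδ]
      have h1 : (N : ℝ) * Real.log m ≤ M * ld := by
        rw [hM_def]
        calc (N : ℝ) * Real.log m ≤ (3 * ld / L) * Real.log m :=
              mul_le_mul_of_nonneg_right hNle hlogm.le
          _ = 3 * Real.log m / L * ld := by ring
      have h2 : M * Real.log δ = -(M * ld) := by rw [hld_def]; ring
      linarith [hlogT_lb]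
  -- conclude
  have hIoo : Set.Ioo (0:ℝ) η ∈ nhdsWithin (0:ℝ) (Set.Ioi 0) :=
    Ioo_mem_nhdsGT_of_mem ⟨le_refl 0, hη0⟩
  have hub_ev : ∀ᶠ δ in nhdsWithin (0:ℝ) (Set.Ioi 0),
      Real.log ((⨆ x : X, μ (ball x δ)).toReal) / Real.log δ ≤ M :=
    Filter.eventually_of_mem hIoo fun δ hδ => (hmain δ hδ).2
  have hlb_ev : ∀ᶠ δ in nhdsWithin (0:ℝ) (Set.Ioi 0),
      s / 2 ≤ Real.log ((⨆ x : X, μ (ball x δ)).toReal) / Real.log δ :=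
    Filter.eventually_of_mem hIoo fun δ hδ => (hmain δ hδ).1
  have hcb := Filter.isCoboundedUnder_ge_of_eventually_le (nhdsWithin (0:ℝ) (Set.Ioi 0)) hub_ev
  have hlim := Filter.le_liminf_of_le hcb hlb_ev
  linarith [hlim, hs0]
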